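/- arXiv:1404.5581 — 2 statements merged into one kernel-verified Lean document; each statement's English description precedes it below -/
import Mathlib

section
/- Suppose w : ℝ → ℝ satisfies w'(t) = (μ/D)·R(w(t))·I(t) where R(w) = R_on·(w/D) + R_off·(1 − w/D), w(0) = 0, and q(t) = ∫₀ᵗ I(s) ds. Assume R_on ≠ R_off, D > 0, and all quantities are such that R(w(t)) > 0 on the interval considered. Then w(t) = D·R_off·(exp(μ·(R_on − R_off)·q(t)/D²) − 1)/(R_on − R_off). -/
theorem stmt_3 (μ D Ron Roff : ℝ) (hD : 0 < D) (hne : Ron ≠ Roff)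
    (I w : ℝ → ℝ) (hI : Continuous I)
    (q : ℝ → ℝ) (hq : ∀ t, q t = ∫ s in (0:ℝ)..t, I s)
    (R : ℝ → ℝ) (hR : ∀ x, R x = Ron * (x / D) + Roff * (1 - x / D))
    (hw' : ∀ t, HasDerivAt w (μ / D * R (w t) * I t) t)
    (hw0 : w 0 = 0)
    (hRpos : ∀ t, 0 < R (w t)) :
    ∀ t, w t = D * Roff * (Real.exp (μ * (Ron - Roff) * q t / D ^ 2) - 1) /
      (Ron - Roff) := by
  have hD' : D ≠ 0 := ne_of_gt hD
  set k : ℝ := μ * (Ron - Roff) / D ^ 2 with hk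
  -- q has derivative I
  have hq' : ∀ t, HasDerivAt q (I t) t := by
    intro t
    have : HasDerivAt (fun u => ∫ s in (0:ℝ)..u, I s) (I t) t :=
      (intervalIntegral.integral_hasStrictDerivAt_right
        (hI.intervalIntegrable _ _) (hI.stronglyMeasurableAtFilter _ _)
        hI.continuousAt).hasDerivAt
    exact this.congr_of_eventuallyEq (Filter.Eventually.of_forall fun u => hq u)
  -- g t = log (R (w t)) - k * q t is constant
  set g : ℝ → ℝ := fun t => Real.log (R (w t)) - k * q t with hg
  have hRw : ∀ t, R (w t) = (Ron - Roff) / D * w t + Roff := by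
    intro t; rw [hR]; ring
  have hg' : ∀ t, HasDerivAt g 0 t := by
    intro t
    have h1 : HasDerivAt (fun t => R (w t))
        ((Ron - Roff) / D * (μ / D * R (w t) * I t)) t := by
      have := ((hw' t).const_mul ((Ron - Roff) / D)).add_const Roff
      exact this.congr_of_eventuallyEq (Filter.Eventually.of_forall fun u => hRw u)
    have h2 : HasDerivAt (fun t => Real.log (R (w t)))
        ((Ron - Roff) / D * (μ / D * R (w t) * I t) / R (w t)) t :=
      h1.log (ne_of_gt (hRpos t))
    have h3 : HasDerivAt (fun t => k * q t) (k * I t) t := (hq' t).const_mul k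
    have := h2.sub h3
    refine HasDerivAt.congr_deriv (f := g) this ?_
    have := ne_of_gt (hRpos t)
    rw [hk]
    field_simp
    ring
  have hconst : ∀ t, g t = g 0 := by
    intro t
    have : ∀ x, deriv g x = 0 := fun x => (hg' x).deriv
    have hd : Differentiable ℝ g := fun x => (hg' x).differentiableAt
    exact is_const_of_deriv_eq_zero hd this t 0
  intro t
  have hq0 : q 0 = 0 := by rw [hq]; simp
  have hR0 : R (w 0) = Roff := by rw [hw0, hR]; simp
  have hRoff : 0 < Roff := hR0 ▸ hRpos 0
  have hgt : Real.log (R (w t)) = Real.log Roff + k * q t := by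
    have := hconst t
    simp only [hg, hq0, hR0] at this
    linarith
  have hRwt : R (w t) = Roff * Real.exp (k * q t) := by
    have := congrArg Real.exp hgt
    rwa [Real.exp_log (hRpos t), Real.exp_add, Real.exp_log hRoff] at this
  have : (Ron - Roff) / D * w t + Roff = Roff * Real.exp (k * q t) := by
    rw [← hRw]; exact hRwt
  have hne' : Ron - Roff ≠ 0 := sub_ne_zero.mpr hne
  field_simp [hk] at this ⊢
  rw [hk] at this
  have e : μ * (Ron - Roff) / D ^ 2 * q t = (Ron - Roff) * q t * μ / D ^ 2 := by ring
  rw [e] at this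
  linear_combination this
end

section
/- Under the assumptions of the ODE w'(t) = (μ/D)·R(w(t))·I(t), w(0)=0, with R(w) = R_on·(w/D) + R_off·(1 − w/D) and R_on ≠ R_off, the total resistance satisfies R(w(t)) = R_off·exp(−μ·(R_off − R_on)·q(t)/D²). -/
theorem stmt_4 (μ D Ron Roff : ℝ) (hD : 0 < D) (hne : Ron ≠ Roff)
    (I w : ℝ → ℝ) (hI : Continuous I)
    (q : ℝ → ℝ) (hq : ∀ t, q t = ∫ s in (0:ℝ)..t, I s)
    (R : ℝ → ℝ) (hR : ∀ x, R x = Ron * (x / D) + Roff * (1 - x / D))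
    (hw' : ∀ t, HasDerivAt w (μ / D * R (w t) * I t) t)
    (hw0 : w 0 = 0)
    (hRpos : ∀ t, 0 < R (w t)) :
    ∀ t, R (w t) = Roff * Real.exp (-(μ * (Roff - Ron) * q t / D ^ 2)) := by
  have hD0 : D ≠ 0 := ne_of_gt hD
  set c : ℝ := μ * (Roff - Ron) / D ^ 2 with hc
  have hq' : ∀ t, HasDerivAt q (I t) t := by
    intro t
    have h := (hI.integral_hasStrictDerivAt 0 t).hasDerivAt
    have hqe : q = fun u => ∫ s in (0:ℝ)..u, I s := funext hq
    rw [hqe]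
    exact h
  have hf : ∀ t, HasDerivAt (fun t => R (w t)) (-(c * (R (w t) * I t))) t := by
    intro t
    have h1 : HasDerivAt (fun t => (Ron - Roff) / D * w t + Roff)
        ((Ron - Roff) / D * (μ / D * R (w t) * I t)) t :=
      ((hw' t).const_mul _).add_const _
    have hfe : (fun t => R (w t)) = fun t => (Ron - Roff) / D * w t + Roff := by
      funext u; rw [hR]; field_simp; ring
    rw [hfe]
    convert h1 using 1
    rw [hR, hc]
    field_simp
    ring
  have hg : ∀ t, HasDerivAt (fun t => R (w t) * Real.exp (c * q t)) 0 t := by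
    intro t
    have he : HasDerivAt (fun t => Real.exp (c * q t))
        (Real.exp (c * q t) * (c * I t)) t := ((hq' t).const_mul c).exp
    have : HasDerivAt (fun t => R (w t) * Real.exp (c * q t))
        (-(c * (R (w t) * I t)) * Real.exp (c * q t) + R (w t) * (Real.exp (c * q t) * (c * I t))) t :=
      (hf t).mul he
    convert this using 1
    ring
  have hconst : ∀ t, R (w t) * Real.exp (c * q t) = R (w 0) * Real.exp (c * q 0) :=
    fun t => is_const_of_deriv_eq_zero (fun x => (hg x).differentiableAt)
      (fun x => (hg x).deriv) t 0
  have hq0 : q 0 = 0 := by rw [hq]; simp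
  have hR0 : R (w 0) = Roff := by rw [hw0, hR]; simp
  intro t
  have h := hconst t
  rw [hq0, hR0] at h
  simp only [mul_zero, Real.exp_zero, mul_one] at h
  have harg : -(μ * (Roff - Ron) * q t / D ^ 2) = -(c * q t) := by rw [hc]; ring
  rw [harg, Real.exp_neg]
  field_simp
  linarith [h]
end
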